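/- With pv_f the p-value of a probability density f, for every β ≥ 0 one has P_f({x : pv_f(x) > β}) ≥ 1 − β. -/

import Mathlib

open MeasureTheory ENNReal

/-- The p-value of `x` w.r.t. a probability density `f`:
`pv_f(x) = P_f({t : f(t) ≤ f(x)})`. -/
noncomputable def pValue {X : Type*} [MeasurableSpace X] (m : Measure X)
    (f : X → ℝ≥0∞) (x : X) : ℝ≥0∞ :=
  ∫⁻ t in {t | f t ≤ f x}, f t ∂m

/-- For a probability density `f` with p-value `pv_f`, for every `β ≥ 0`,
`P_f({x : pv_f(x) > β}) ≥ 1 - β`. -/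
theorem pValue_gt_prob_ge {X : Type*} [MeasurableSpace X] (m : Measure X)
    [SigmaFinite m] (f : X → ℝ≥0∞) (hf : Measurable f)
    (hf1 : ∫⁻ x, f x ∂m = 1) (β : ℝ≥0∞) :
    1 - β ≤ ∫⁻ x in {x | β < pValue m f x}, f x ∂m := by
  classical
  set g : ℝ≥0∞ → ℝ≥0∞ := fun c => ∫⁻ t in {t | f t ≤ c}, f t ∂m with hgdef
  have hgmono : Monotone g := fun a b hab =>
    lintegral_mono_set (fun t ht => le_trans ht hab)
  have hpv : ∀ x, pValue m f x = g (f x) := fun x => rfl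
  have hpvm : Measurable (fun x => pValue m f x) := hgmono.measurable.comp hf
  set A : Set X := {x | pValue m f x ≤ β} with hAdef
  have hAm : MeasurableSet A := measurableSet_le hpvm measurable_const
  have hcompl : {x | β < pValue m f x} = Aᶜ := by
    ext x
    simp only [hAdef, Set.mem_compl_iff, Set.mem_setOf_eq, not_le]
  -- the measure with density f
  set ν := m.withDensity f with hνdef
  have hν : ∀ s : Set X, MeasurableSet s → ν s = ∫⁻ x in s, f x ∂m :=
    fun s hs => withDensity_apply f hs
  have hle : ∀ c : ℝ≥0∞, MeasurableSet {t | f t ≤ c} := fun c => hf measurableSet_Iic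
  have hpv' : ∀ x, pValue m f x = ν {t | f t ≤ f x} := fun x => (hν _ (hle (f x))).symm
  -- key bound: ∫_A f ≤ β
  have key : ∫⁻ x in A, f x ∂m ≤ β := by
    rw [← hν A hAm]
    rcases Set.eq_empty_or_nonempty A with hAe | ⟨x0, hx0⟩
    · simp [hAe]
    by_cases hmax : ∃ x ∈ A, ∀ y ∈ A, f y ≤ f x
    · obtain ⟨x, hxA, hx⟩ := hmax
      calc ν A ≤ ν {t | f t ≤ f x} := measure_mono fun t ht => hx t ht
        _ = pValue m f x := (hpv' x).symm
        _ ≤ β := hxA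
    · push_neg at hmax
      set D := f '' A with hDdef
      obtain ⟨u, humono, hutend, huD⟩ :=
        exists_seq_tendsto_sSup (⟨f x0, ⟨x0, hx0, rfl⟩⟩ : D.Nonempty) (OrderTop.bddAbove D)
      have hsup : (⨆ n, u n) = sSup D := iSup_eq_of_tendsto humono hutend
      have hsub : A ⊆ ⋃ n, {t | f t ≤ u n} := by
        intro t ht
        obtain ⟨y, hyA, hty⟩ := hmax t ht
        have h1 : f t < ⨆ n, u n := by
          rw [hsup]
          exact lt_of_lt_of_le hty (le_sSup ⟨y, hyA, rfl⟩)
        obtain ⟨n, hn⟩ := lt_iSup_iff.mp h1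
        exact Set.mem_iUnion.mpr ⟨n, hn.le⟩
      have hmono' : Monotone (fun n => {t | f t ≤ u n}) := by
        intro a b hab t ht
        exact le_trans ht (humono hab)
      calc ν A ≤ ν (⋃ n, {t | f t ≤ u n}) := measure_mono hsub
        _ = ⨆ n, ν {t | f t ≤ u n} := hmono'.measure_iUnion
        _ ≤ β := by
            refine iSup_le fun n => ?_
            obtain ⟨x, hxA, hx⟩ := huD n
            rw [← hx, ← hpv' x]
            exact hxA
  have total : (∫⁻ x in A, f x ∂m) + ∫⁻ x in Aᶜ, f x ∂m = 1 := by
    rw [lintegral_add_compl f hAm, hf1]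
  rw [hcompl, tsub_le_iff_right]
  calc (1 : ℝ≥0∞) = (∫⁻ x in A, f x ∂m) + ∫⁻ x in Aᶜ, f x ∂m := total.symm
    _ ≤ β + ∫⁻ x in Aᶜ, f x ∂m := add_le_add_left key _
    _ = (∫⁻ x in Aᶜ, f x ∂m) + β := add_comm _ _
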